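/- Let f ∈ ℤ[a₁,a₂,a₃,a₄,a₆]. Then f is invariant, i.e. φ(f) equals the image of f under the canonical inclusion, if and only if f lies in the ℤ-subalgebra of ℤ[a₁,a₂,a₃,a₄,a₆] generated by b₂, b₄, b₆, b₈. (This is the degree-zero cohomology of the Hopf algebroid (D,Σ) presenting the moduli stack of cubic curves with a chosen splitting of the Hodge–de Rham exact sequence: the ring of integral quasimodular forms is ℤ[b₂,b₄,b₆,b₈].) -/

import Mathlib

open MvPolynomial Finsupp

noncomputable section

/-- `D = ℤ[a₁, a₂, a₃, a₄, a₆]`, with variables indexed `0 ↦ a₁, 1 ↦ a₂, 2 ↦ a₃, 3 ↦ a₄,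
`4 ↦ a₆`. -/
abbrev D : Type := MvPolynomial (Fin 5) ℤ

/-- `Σ = D[s, t]`, with `0 ↦ s` and `1 ↦ t`. -/
abbrev Sg : Type := MvPolynomial (Fin 2) D

def a1 : D := X 0
def a2 : D := X 1
def a3 : D := X 2
def a4 : D := X 3
def a6 : D := X 4

def b2 : D := a1 ^ 2 + 4 * a2
def b4 : D := 2 * a4 + a1 * a3
def b6 : D := a3 ^ 2 + 4 * a6
def b8 : D := a1 ^ 2 * a6 + 4 * a2 * a6 - a1 * a3 * a4 + a2 * a3 ^ 2 - a4 ^ 2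

def s : Sg := X 0
def t : Sg := X 1

/-- The right unit of the Hopf algebroid `(D, Σ)` presenting the moduli stack of cubic curves
with a chosen splitting of the Hodge–de Rham exact sequence: the effect of the coordinate change
`y ↦ y + s·x + t` on Weierstrass coefficients. -/
def φ : D →+* Sg :=
  (aeval ![C a1 + 2 * s,
           C a2 - s * C a1 - s ^ 2,
           C a3 + 2 * t,
           C a4 - s * C a3 - t * C a1 - 2 * s * t,
           C a6 - t * C a3 - t ^ 2] : D →ₐ[ℤ] Sg).toRingHom


-- ## Invariance of the b-invariants

lemma φ_a1 : φ a1 = C a1 + 2 * s := by simp [φ, a1]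
lemma φ_a2 : φ a2 = C a2 - s * C a1 - s ^ 2 := by simp [φ, a2]
lemma φ_a3 : φ a3 = C a3 + 2 * t := by simp [φ, a3]
lemma φ_a4 : φ a4 = C a4 - s * C a3 - t * C a1 - 2 * s * t := by simp [φ, a4]
lemma φ_a6 : φ a6 = C a6 - t * C a3 - t ^ 2 := by simp [φ, a6]

lemma φ_b2 : φ b2 = C b2 := by
  simp only [b2, map_add, map_mul, map_pow, map_ofNat, φ_a1, φ_a2]
  ring

lemma φ_b4 : φ b4 = C b4 := by
  simp only [b4, map_add, map_mul, map_pow, map_ofNat, φ_a1, φ_a3, φ_a4]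
  ring

lemma φ_b6 : φ b6 = C b6 := by
  simp only [b6, map_add, map_mul, map_pow, map_ofNat, φ_a3, φ_a6]
  ring

lemma φ_b8 : φ b8 = C b8 := by
  simp only [b8, map_add, map_sub, map_mul, map_pow, map_ofNat, φ_a1, φ_a2, φ_a3, φ_a4, φ_a6]
  ring

lemma b4_sq : b4 ^ 2 = b2 * b6 - 4 * b8 := by
  simp only [b2, b4, b6, b8, a1, a2, a3, a4, a6]; ring


-- ## Leading term calculus

def σw (m : Fin 5 →₀ ℕ) : ℕ := 2 * m 0 + m 1 + 2 * m 2 + 3 * m 3 + m 4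

lemma σw_add (m n : Fin 5 →₀ ℕ) : σw (m + n) = σw m + σw n := by
  simp [σw, Finsupp.add_apply]; ring

def Lead (N : ℕ) (m₀ : Fin 5 →₀ ℕ) (c : ℤ) (g : D) : Prop :=
  σw m₀ = N ∧ coeff m₀ g = c ∧ ∀ m, coeff m g ≠ 0 → σw m ≤ N ∧ (σw m = N → m = m₀)

lemma Lead.mul {N M : ℕ} {m₀ n₀ : Fin 5 →₀ ℕ} {c d : ℤ} {g h : D}
    (hg : Lead N m₀ c g) (hh : Lead M n₀ d h) :
    Lead (N + M) (m₀ + n₀) (c * d) (g * h) := by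
  obtain ⟨hσg, hcg, hg'⟩ := hg
  obtain ⟨hσh, hch, hh'⟩ := hh
  refine ⟨by rw [σw_add, hσg, hσh], ?_, ?_⟩
  · have key : ∑ x ∈ Finset.HasAntidiagonal.antidiagonal (m₀ + n₀), coeff x.1 g * coeff x.2 h
        = coeff m₀ g * coeff n₀ h := by
      refine Finset.sum_eq_single_of_mem (m₀, n₀) (Finset.HasAntidiagonal.mem_antidiagonal.mpr rfl) ?_
      rintro ⟨u, v⟩ huv hne
      rw [Finset.HasAntidiagonal.mem_antidiagonal] at huv
      by_cases hu : coeff u g = 0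
      · simp [hu]
      by_cases hv : coeff v h = 0
      · simp [hv]
      obtain ⟨hu1, hu2⟩ := hg' u hu
      obtain ⟨hv1, hv2⟩ := hh' v hv
      have hsum : σw u + σw v = N + M := by
        rw [← σw_add, huv, σw_add, hσg, hσh]
      have e1 : u = m₀ := hu2 (by omega)
      have e2 : v = n₀ := hv2 (by omega)
      exact absurd (Prod.ext e1 e2) hne
    rw [coeff_mul, key, hcg, hch]
  · intro m hm
    rw [coeff_mul] at hm
    obtain ⟨⟨u, v⟩, huv, hne⟩ := Finset.exists_ne_zero_of_sum_ne_zero hm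
    rw [Finset.HasAntidiagonal.mem_antidiagonal] at huv
    have hu : coeff u g ≠ 0 := fun h0 => hne (by simp [h0])
    have hv : coeff v h ≠ 0 := fun h0 => hne (by simp [h0])
    obtain ⟨hu1, hu2⟩ := hg' u hu
    obtain ⟨hv1, hv2⟩ := hh' v hv
    have hσm : σw m = σw u + σw v := by rw [← huv, σw_add]
    constructor
    · omega
    · intro hEq
      have e1 : u = m₀ := hu2 (by omega)
      have e2 : v = n₀ := hv2 (by omega)
      rw [← huv, e1, e2]

lemma Lead.one : Lead 0 0 1 (1 : D) := by
  refine ⟨by simp [σw], by simp, fun m hm => ?_⟩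
  rw [coeff_one] at hm
  have : (0 : Fin 5 →₀ ℕ) = m := by by_contra h; simp [h] at hm
  subst this
  simp [σw]

lemma Lead.pow {N : ℕ} {m₀ : Fin 5 →₀ ℕ} {c : ℤ} {g : D} (hg : Lead N m₀ c g) (n : ℕ) :
    Lead (n * N) (n • m₀) (c ^ n) (g ^ n) := by
  induction n with
  | zero => simpa using Lead.one
  | succ n ih =>
    have := ih.mul hg
    simpa [pow_succ, succ_nsmul, Nat.succ_mul] using this

-- ## Leading terms of the generators

lemma hb2 : b2 = monomial (single 0 2) 1 + monomial (single 1 1) 4 := by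
  simp [b2, a1, a2, X, monomial_mul, monomial_pow, smul_single]
  rw [show (4 : D) = C 4 from by simp, C_mul_monomial]
  norm_num

lemma hb4 : b4 = monomial (single 3 1) 2 + monomial (single 0 1 + single 2 1) 1 := by
  simp [b4, a1, a3, a4, X, monomial_mul]
  rw [show (2 : D) = C 2 from by simp, C_mul_monomial]
  norm_num

lemma hb6 : b6 = monomial (single 2 2) 1 + monomial (single 4 1) 4 := by
  simp [b6, a3, a6, X, monomial_mul, monomial_pow, smul_single]
  rw [show (4 : D) = C 4 from by simp, C_mul_monomial]
  norm_num

lemma hb8 : b8 = monomial (single 0 2 + single 4 1) 1 + monomial (single 1 1 + single 4 1) 4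
    + monomial (single 0 1 + single 2 1 + single 3 1) (-1)
    + monomial (single 1 1 + single 2 2) 1 + monomial (single 3 2) (-1) := by
  simp [b8, a1, a2, a3, a4, a6, X, monomial_mul, monomial_pow, smul_single]
  rw [show (4 : D) = C 4 from by simp, C_mul_monomial]
  norm_num [monomial_mul]
  abel

lemma lead_b2 : Lead 4 (single 0 2) 1 b2 := by
  refine ⟨by simp [σw, Finsupp.single_apply], ?_, ?_⟩
  · rw [hb2, coeff_add, coeff_monomial, coeff_monomial, if_pos rfl,
      if_neg (by simp [Finsupp.ext_iff]; use 0; simp [Finsupp.single_apply])]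
    norm_num
  · intro m hm
    rw [hb2, coeff_add, coeff_monomial, coeff_monomial] at hm
    by_cases h1 : single 0 2 = m
    · subst h1; exact ⟨by simp [σw, Finsupp.single_apply], fun _ => rfl⟩
    by_cases h2 : single 1 1 = m
    · subst h2; simp [σw, Finsupp.single_apply]
    · simp [h1, h2] at hm

lemma lead_b4 : Lead 4 (single 0 1 + single 2 1) 1 b4 := by
  refine ⟨by simp [σw, Finsupp.add_apply, Finsupp.single_apply], ?_, ?_⟩
  · rw [hb4, coeff_add, coeff_monomial, coeff_monomial, if_pos rfl,
      if_neg (by simp [Finsupp.ext_iff]; use 0; simp [Finsupp.add_apply, Finsupp.single_apply])]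
    norm_num
  · intro m hm
    rw [hb4, coeff_add, coeff_monomial, coeff_monomial] at hm
    by_cases h1 : single 3 1 = m
    · subst h1; simp [σw, Finsupp.single_apply]
    by_cases h2 : single 0 1 + single 2 1 = m
    · subst h2
      exact ⟨by simp [σw, Finsupp.add_apply, Finsupp.single_apply], fun _ => rfl⟩
    · simp [h1, h2] at hm

lemma lead_b6 : Lead 4 (single 2 2) 1 b6 := by
  refine ⟨by simp [σw, Finsupp.single_apply], ?_, ?_⟩
  · rw [hb6, coeff_add, coeff_monomial, coeff_monomial, if_pos rfl,
      if_neg (by simp [Finsupp.ext_iff]; use 2; simp [Finsupp.single_apply])]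
    norm_num
  · intro m hm
    rw [hb6, coeff_add, coeff_monomial, coeff_monomial] at hm
    by_cases h1 : single 2 2 = m
    · subst h1; exact ⟨by simp [σw, Finsupp.single_apply], fun _ => rfl⟩
    by_cases h2 : single 4 1 = m
    · subst h2; simp [σw, Finsupp.single_apply]
    · simp [h1, h2] at hm

lemma lead_b8 : Lead 7 (single 0 1 + single 2 1 + single 3 1) (-1) b8 := by
  refine ⟨by simp [σw, Finsupp.add_apply, Finsupp.single_apply], ?_, ?_⟩
  · rw [hb8, coeff_add, coeff_add, coeff_add, coeff_add,
      coeff_monomial, coeff_monomial, coeff_monomial, coeff_monomial, coeff_monomial,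
      if_pos rfl,
      if_neg (by simp [Finsupp.ext_iff]; use 3; simp [Finsupp.add_apply, Finsupp.single_apply]),
      if_neg (by simp [Finsupp.ext_iff]; use 0; simp [Finsupp.add_apply, Finsupp.single_apply]),
      if_neg (by simp [Finsupp.ext_iff]; use 0; simp [Finsupp.add_apply, Finsupp.single_apply]),
      if_neg (by simp [Finsupp.ext_iff]; use 0; simp [Finsupp.add_apply, Finsupp.single_apply])]
    norm_num
  · intro m hm
    rw [hb8, coeff_add, coeff_add, coeff_add, coeff_add,
      coeff_monomial, coeff_monomial, coeff_monomial, coeff_monomial, coeff_monomial] at hm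
    by_cases h1 : single 0 2 + single 4 1 = m
    · subst h1; simp [σw, Finsupp.add_apply, Finsupp.single_apply]
    by_cases h2 : single 1 1 + single 4 1 = m
    · subst h2; simp [σw, Finsupp.add_apply, Finsupp.single_apply]
    by_cases h3 : single 0 1 + single 2 1 + single 3 1 = m
    · subst h3
      exact ⟨by simp [σw, Finsupp.add_apply, Finsupp.single_apply], fun _ => rfl⟩
    by_cases h4 : single 1 1 + single 2 2 = m
    · subst h4; simp [σw, Finsupp.add_apply, Finsupp.single_apply]
    by_cases h5 : single 3 2 = m
    · subst h5; simp [σw, Finsupp.single_apply]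
    · simp [h1, h2, h3, h4, h5] at hm

-- ## The monomial family

abbrev Iind := ℕ × ℕ × ℕ × Bool
def Sf : Iind → D := fun e => b2 ^ e.1 * b6 ^ e.2.1 * b8 ^ e.2.2.1 * (bif e.2.2.2 then b4 else 1)
def μf : Iind → (Fin 5 →₀ ℕ) := fun e =>
  single 0 (2 * e.1 + e.2.2.1 + (bif e.2.2.2 then 1 else 0))
    + single 2 (2 * e.2.1 + e.2.2.1 + (bif e.2.2.2 then 1 else 0))
    + single 3 e.2.2.1
def Nf : Iind → ℕ := fun e => 4 * e.1 + 4 * e.2.1 + 7 * e.2.2.1 + (bif e.2.2.2 then 4 else 0)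

lemma μf_apply0 (e : Iind) : μf e 0 = 2 * e.1 + e.2.2.1 + (bif e.2.2.2 then 1 else 0) := by
  simp [μf, Finsupp.add_apply, Finsupp.single_apply]
lemma μf_apply2 (e : Iind) : μf e 2 = 2 * e.2.1 + e.2.2.1 + (bif e.2.2.2 then 1 else 0) := by
  simp [μf, Finsupp.add_apply, Finsupp.single_apply]
lemma μf_apply3 (e : Iind) : μf e 3 = e.2.2.1 := by
  simp [μf, Finsupp.add_apply, Finsupp.single_apply]

lemma μf_inj : Function.Injective μf := by
  rintro ⟨i, j, k, ε⟩ ⟨i', j', k', ε'⟩ h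
  have h0 := congrArg (fun m => m 0) h
  have h2 := congrArg (fun m => m 2) h
  have h3 := congrArg (fun m => m 3) h
  simp only [μf_apply0, μf_apply2, μf_apply3] at h0 h2 h3
  cases ε <;> cases ε' <;> simp_all <;> omega

lemma lead_S (e : Iind) : Lead (Nf e) (μf e) ((-1) ^ e.2.2.1) (Sf e) := by
  obtain ⟨i, j, k, ε⟩ := e
  have h := ((lead_b2.pow i).mul (lead_b6.pow j)).mul (lead_b8.pow k)
  simp only [one_pow, one_mul, mul_one] at h
  have em : ∀ εn : ℕ, i • (single 0 2 : Fin 5 →₀ ℕ) + j • single 2 2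
      + k • (single 0 1 + single 2 1 + single 3 1) + (single 0 εn + single 2 εn)
      = single 0 (2 * i + k + εn) + single 2 (2 * j + k + εn) + single 3 k := by
    intro εn
    ext x
    fin_cases x <;>
      simp [Finsupp.add_apply, Finsupp.single_apply, Finsupp.smul_apply] <;> ring
  cases ε
  case false =>
    have em0 := em 0
    simp only [Finsupp.single_zero, add_zero] at em0
    rw [em0] at h
    have eS : Sf (i, j, k, false) = b2 ^ i * b6 ^ j * b8 ^ k := by simp [Sf]
    have eN : Nf (i, j, k, false) = i * 4 + j * 4 + k * 7 := by simp [Nf]; ring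
    have eμ : μf (i, j, k, false) = single 0 (2 * i + k) + single 2 (2 * j + k) + single 3 k := by
      simp [μf]
    rw [eS, eN, eμ]
    exact h
  case true =>
    have h2 := h.mul lead_b4
    rw [em 1] at h2
    simp only [mul_one] at h2
    have eS : Sf (i, j, k, true) = b2 ^ i * b6 ^ j * b8 ^ k * b4 := by simp [Sf]
    have eN : Nf (i, j, k, true) = i * 4 + j * 4 + k * 7 + 4 := by simp [Nf]; ring
    have eμ : μf (i, j, k, true)
        = single 0 (2 * i + k + 1) + single 2 (2 * j + k + 1) + single 3 k := by simp [μf]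
    rw [eS, eN, eμ]
    exact h2

-- ## The rational side

abbrev K5 : Type := MvPolynomial (Fin 5) ℚ
def ι : D →+* K5 := MvPolynomial.map (Int.castRingHom ℚ)
def tv : Fin 2 → K5 := ![C (-1/2 : ℚ) * X 0, C (-1/2 : ℚ) * X 2]
def E : Sg →+* K5 := eval₂Hom ι tv
def ψ : D →+* K5 := E.comp φ

lemma E_C (g : D) : E (C g) = ι g := by simp [E]

def half : K5 := C (1/2 : ℚ)

lemma hh : 2 * half = 1 := by
  rw [half, show (2:K5) = C (2:ℚ) from (map_ofNat C 2).symm, ← C_mul]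
  norm_num

lemma E_s : E s = -half * X 0 := by
  rw [E, s, eval₂Hom_X', tv, half]
  rw [show (C (-1/2:ℚ) : K5) = - C (1/2:ℚ) from by rw [← C_neg]; norm_num]
  simp [Matrix.cons_val_zero]

lemma E_t : E t = -half * X 2 := by
  rw [E, t, eval₂Hom_X', tv, half]
  rw [show (C (-1/2:ℚ) : K5) = - C (1/2:ℚ) from by rw [← C_neg]; norm_num]
  simp

lemma ι_a1 : ι a1 = X 0 := by simp [ι, a1]
lemma ι_a2 : ι a2 = X 1 := by simp [ι, a2]
lemma ι_a3 : ι a3 = X 2 := by simp [ι, a3]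
lemma ι_a4 : ι a4 = X 3 := by simp [ι, a4]
lemma ι_a6 : ι a6 = X 4 := by simp [ι, a6]

lemma quarter_eq : C (1/4 : ℚ) = half * half := by
  rw [half, ← C_mul]; norm_num

lemma half_eq : C (1/2 : ℚ) = half := rfl

lemma ψ_X0 : ψ (X 0) = 0 := by
  have h : φ (X 0) = C a1 + 2 * s := by simp [φ]
  rw [ψ, RingHom.comp_apply, h, map_add, map_mul, E_C, E_s, map_ofNat, ι_a1]
  linear_combination (-(X 0 : K5)) * hh

lemma ψ_X1 : ψ (X 1) = (1/4 : ℚ) • ι b2 := by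
  have h : φ (X 1) = C a2 - s * C a1 - s ^ 2 := by simp [φ]
  rw [ψ, RingHom.comp_apply, h, map_sub, map_sub, map_mul, map_pow, E_C, E_C, E_s, ι_a1, ι_a2]
  rw [smul_eq_C_mul, show ι b2 = X 0 ^ 2 + 4 * X 1 from by simp [ι, b2, a1, a2], quarter_eq]
  linear_combination (-((X 1 : K5) * (1 + 2 * half) + half * X 0 ^ 2)) * hh

lemma ψ_X2 : ψ (X 2) = 0 := by
  have h : φ (X 2) = C a3 + 2 * t := by simp [φ]
  rw [ψ, RingHom.comp_apply, h, map_add, map_mul, E_C, E_t, map_ofNat, ι_a3]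
  linear_combination (-(X 2 : K5)) * hh

lemma ψ_X3 : ψ (X 3) = (1/2 : ℚ) • ι b4 := by
  have h : φ (X 3) = C a4 - s * C a3 - t * C a1 - 2 * s * t := by simp [φ]
  rw [ψ, RingHom.comp_apply, h, map_sub, map_sub, map_sub, map_mul, map_mul, map_mul, map_mul,
    E_C, E_C, E_C, E_s, E_t, map_ofNat, ι_a1, ι_a3, ι_a4]
  rw [smul_eq_C_mul, show ι b4 = 2 * X 3 + X 0 * X 2 from by simp [ι, b4, a1, a3, a4], half_eq]
  linear_combination (-((X 3 : K5) + half * (X 0 * X 2))) * hh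

lemma ψ_X4 : ψ (X 4) = (1/4 : ℚ) • ι b6 := by
  have h : φ (X 4) = C a6 - t * C a3 - t ^ 2 := by simp [φ]
  rw [ψ, RingHom.comp_apply, h, map_sub, map_sub, map_mul, map_pow, E_C, E_C, E_t, ι_a3, ι_a6]
  rw [smul_eq_C_mul, show ι b6 = X 2 ^ 2 + 4 * X 4 from by simp [ι, b6, a3, a6], quarter_eq]
  linear_combination (-((X 4 : K5) * (1 + 2 * half) + half * X 2 ^ 2)) * hh

-- ## Descent

lemma ι_inj : Function.Injective ι :=
  MvPolynomial.map_injective (Int.castRingHom ℚ) Int.cast_injective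

lemma Sf_mem_adjoin (e : Iind) : Sf e ∈ Algebra.adjoin ℤ ({b2, b4, b6, b8} : Set D) := by
  obtain ⟨i, j, k, ε⟩ := e
  have h2 : b2 ∈ Algebra.adjoin ℤ ({b2, b4, b6, b8} : Set D) :=
    Algebra.subset_adjoin (by simp)
  have h4 : b4 ∈ Algebra.adjoin ℤ ({b2, b4, b6, b8} : Set D) :=
    Algebra.subset_adjoin (by simp)
  have h6 : b6 ∈ Algebra.adjoin ℤ ({b2, b4, b6, b8} : Set D) :=
    Algebra.subset_adjoin (by simp)
  have h8 : b8 ∈ Algebra.adjoin ℤ ({b2, b4, b6, b8} : Set D) :=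
    Algebra.subset_adjoin (by simp)
  refine mul_mem (mul_mem (mul_mem (pow_mem h2 i) (pow_mem h6 j)) (pow_mem h8 k)) ?_
  cases ε
  · simpa using one_mem _
  · simpa using h4

lemma coeff_Sf_eq_zero {e e' : Iind} (hne : e ≠ e') (hle : Nf e ≤ Nf e') :
    coeff (μf e') (Sf e) = 0 := by
  by_contra h0
  obtain ⟨hb, heq⟩ := (lead_S e).2.2 (μf e') h0
  have hσ : σw (μf e') = Nf e' := (lead_S e').1
  have : Nf e = Nf e' := le_antisymm hle (by omega)
  exact hne (μf_inj (heq (by omega)).symm)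

lemma descent : ∀ (n : ℕ) (c : Iind →₀ ℚ) (f : D), c.support.card ≤ n →
    (c.sum fun e q => q • ι (Sf e)) = ι f →
    f ∈ Algebra.adjoin ℤ ({b2, b4, b6, b8} : Set D) := by
  intro n
  induction n with
  | zero =>
    intro c f hcard hsum
    rw [Nat.le_zero, Finset.card_eq_zero, Finsupp.support_eq_empty] at hcard
    subst hcard
    rw [Finsupp.sum_zero_index] at hsum
    have : f = 0 := ι_inj (by rw [← hsum, map_zero])
    rw [this]; exact zero_mem _
  | succ n ih =>
    intro c f hcard hsum
    by_cases hc : c = 0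
    · subst hc
      rw [Finsupp.sum_zero_index] at hsum
      have : f = 0 := ι_inj (by rw [← hsum, map_zero])
      rw [this]; exact zero_mem _
    · obtain ⟨e, he, hemax⟩ := Finset.exists_max_image c.support Nf
        (Finsupp.support_nonempty_iff.mpr hc)
      have hcoeff : ((coeff (μf e) f : ℤ) : ℚ) = c e * (((-1) ^ e.2.2.1 : ℤ) : ℚ) := by
        have h1 := congrArg (fun p => coeff (μf e) p) hsum
        rw [show coeff (μf e) (ι f) = ((coeff (μf e) f : ℤ) : ℚ) from by
          simp [ι, coeff_map]] at h1
        rw [← h1, Finsupp.sum, coeff_sum, Finset.sum_eq_single_of_mem e he]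
        · rw [coeff_smul, show coeff (μf e) (ι (Sf e)) = (((-1) ^ e.2.2.1 : ℤ) : ℚ) from by
            simp only [ι, coeff_map]; rw [(lead_S e).2.1]; simp]
          simp
        · intro e' he' hne
          rw [coeff_smul, show coeff (μf e) (ι (Sf e')) = ((0 : ℤ) : ℚ) from by
            simp only [ι, coeff_map]; rw [coeff_Sf_eq_zero hne (hemax e' he')]; simp]
          simp
      set z : ℤ := (-1) ^ e.2.2.1 * coeff (μf e) f with hz
      have hsq : ((-1 : ℚ)) ^ e.2.2.1 * ((-1 : ℚ)) ^ e.2.2.1 = 1 := by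
        rw [← pow_add]; exact Even.neg_one_pow ⟨e.2.2.1, by ring⟩
      have hce : (c e : ℚ) = (z : ℚ) := by
        push_cast [hz]
        push_cast at hcoeff
        linear_combination (-((-1 : ℚ)) ^ e.2.2.1) * hcoeff - (c e) * hsq
      set f' := f - z • Sf e with hf'
      have hsum' : ((c.erase e).sum fun e' q => q • ι (Sf e')) = ι f' := by
        have hsplit : (c.sum fun e' q => q • ι (Sf e'))
            = c e • ι (Sf e) + ((c.erase e).sum fun e' q => q • ι (Sf e')) := by
          rw [Finsupp.sum, Finsupp.sum, Finsupp.support_erase,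
            ← Finset.add_sum_erase _ _ he]
          congr 1
          refine Finset.sum_congr rfl fun x hx => ?_
          rw [Finsupp.erase_ne (Finset.mem_erase.mp hx).1]
        have hcz : c e • ι (Sf e) = z • ι (Sf e) := by
          rw [hce, Int.cast_smul_eq_zsmul]
        rw [hf', map_sub, ← hsum, hsplit, hcz, map_zsmul]
        abel
      have hcard' : (c.erase e).support.card ≤ n := by
        rw [Finsupp.support_erase]
        have h2 := Finset.card_erase_of_mem he
        omega
      have hmem' := ih (c.erase e) f' hcard' hsum'
      have hf : f = f' + z • Sf e := by rw [hf']; abel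
      rw [hf]
      exact add_mem hmem' (zsmul_mem (Sf_mem_adjoin e) z)

-- ## Span membership

def Msp : Submodule ℚ K5 := Submodule.span ℚ (Set.range fun e : Iind => ι (Sf e))

lemma Sf_mem_Msp (e : Iind) : ι (Sf e) ∈ Msp :=
  Submodule.subset_span ⟨e, rfl⟩

lemma one_mem_Msp : (1 : K5) ∈ Msp := by
  have : ι (Sf (0, 0, 0, false)) = 1 := by simp [Sf]
  exact this ▸ Sf_mem_Msp (0, 0, 0, false)

lemma Sf_mul_b2 (e : Iind) : Sf e * b2 = Sf (e.1 + 1, e.2.1, e.2.2.1, e.2.2.2) := by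
  obtain ⟨i, j, k, ε⟩ := e; simp [Sf]; ring
lemma Sf_mul_b6 (e : Iind) : Sf e * b6 = Sf (e.1, e.2.1 + 1, e.2.2.1, e.2.2.2) := by
  obtain ⟨i, j, k, ε⟩ := e; simp [Sf]; ring
lemma Sf_mul_b4_false (i j k : ℕ) : Sf (i, j, k, false) * b4 = Sf (i, j, k, true) := by
  simp [Sf]
lemma Sf_mul_b4_true (i j k : ℕ) :
    Sf (i, j, k, true) * b4 = Sf (i + 1, j + 1, k, false) - 4 * Sf (i, j, k + 1, false) := by
  simp only [Sf, cond_true, cond_false]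
  linear_combination (b2 ^ i * b6 ^ j * b8 ^ k) * b4_sq

lemma four_smul (x : K5) : (4 : K5) * x = (4 : ℚ) • x := by
  rw [smul_eq_C_mul, map_ofNat]

lemma mul_b2_mem {x : K5} (hx : x ∈ Msp) : x * ι b2 ∈ Msp := by
  induction hx using Submodule.span_induction with
  | mem y hy =>
    obtain ⟨e, rfl⟩ := hy
    rw [← map_mul, Sf_mul_b2]
    exact Sf_mem_Msp _
  | zero => rw [zero_mul]; exact zero_mem _
  | add y z hy hz ihy ihz => rw [add_mul]; exact add_mem ihy ihz
  | smul q y hy ihy => rw [smul_mul_assoc]; exact Submodule.smul_mem _ _ ihy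

lemma mul_b6_mem {x : K5} (hx : x ∈ Msp) : x * ι b6 ∈ Msp := by
  induction hx using Submodule.span_induction with
  | mem y hy =>
    obtain ⟨e, rfl⟩ := hy
    rw [← map_mul, Sf_mul_b6]
    exact Sf_mem_Msp _
  | zero => rw [zero_mul]; exact zero_mem _
  | add y z hy hz ihy ihz => rw [add_mul]; exact add_mem ihy ihz
  | smul q y hy ihy => rw [smul_mul_assoc]; exact Submodule.smul_mem _ _ ihy

lemma mul_b4_mem {x : K5} (hx : x ∈ Msp) : x * ι b4 ∈ Msp := by
  induction hx using Submodule.span_induction with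
  | mem y hy =>
    obtain ⟨e, rfl⟩ := hy
    obtain ⟨i, j, k, ε⟩ := e
    cases ε
    · rw [← map_mul, Sf_mul_b4_false]
      exact Sf_mem_Msp _
    · rw [← map_mul, Sf_mul_b4_true, map_sub, map_mul, map_ofNat, four_smul]
      exact sub_mem (Sf_mem_Msp _) (Submodule.smul_mem _ _ (Sf_mem_Msp _))
  | zero => rw [zero_mul]; exact zero_mem _
  | add y z hy hz ihy ihz => rw [add_mul]; exact add_mem ihy ihz
  | smul q y hy ihy => rw [smul_mul_assoc]; exact Submodule.smul_mem _ _ ihy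

lemma ψ_mem (f : D) : ψ f ∈ Msp := by
  induction f using MvPolynomial.induction_on with
  | C a =>
    rw [show (C a : D) = ((a : ℤ) : D) from eq_intCast (C : ℤ →+* D) a, map_intCast]
    rw [show ((a : ℤ) : K5) = ((a : ℚ)) • (1 : K5) from by
      rw [smul_eq_C_mul, mul_one]
      simp]
    exact Submodule.smul_mem _ _ one_mem_Msp
  | add p q hp hq => rw [map_add]; exact add_mem hp hq
  | mul_X p i hp =>
    rw [map_mul]
    fin_cases i
    · show ψ p * ψ (X 0) ∈ Msp
      rw [ψ_X0, mul_zero]; exact zero_mem _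
    · show ψ p * ψ (X 1) ∈ Msp
      rw [ψ_X1, mul_smul_comm]; exact Submodule.smul_mem _ _ (mul_b2_mem hp)
    · show ψ p * ψ (X 2) ∈ Msp
      rw [ψ_X2, mul_zero]; exact zero_mem _
    · show ψ p * ψ (X 3) ∈ Msp
      rw [ψ_X3, mul_smul_comm]; exact Submodule.smul_mem _ _ (mul_b4_mem hp)
    · show ψ p * ψ (X 4) ∈ Msp
      rw [ψ_X4, mul_smul_comm]; exact Submodule.smul_mem _ _ (mul_b6_mem hp)

/-- A polynomial `f ∈ ℤ[a₁, a₂, a₃, a₄, a₆]` is invariant (i.e. `φ(f) = f`) if and only if it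
lies in the subring `ℤ[b₂, b₄, b₆, b₈]` of integral quasimodular forms. -/
theorem invariant_iff_mem_adjoin_b (f : D) :
    φ f = C f ↔ f ∈ Algebra.adjoin ℤ ({b2, b4, b6, b8} : Set D) := by
  constructor
  · intro h
    have h1 : ι f = ψ f := by rw [ψ, RingHom.comp_apply, h, E_C]
    have h2 : ι f ∈ Msp := by rw [h1]; exact ψ_mem f
    rw [Msp] at h2
    obtain ⟨c, hc⟩ := Finsupp.mem_span_range_iff_exists_finsupp.mp h2
    exact descent c.support.card c f le_rfl hc
  · intro hf
    induction hf using Algebra.adjoin_induction with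
    | mem x hx =>
      rcases hx with h | h | h | h
      · rw [h, φ_b2]
      · rw [h, φ_b4]
      · rw [h, φ_b6]
      · rw [Set.mem_singleton_iff.mp h, φ_b8]
    | algebraMap r => rw [show (algebraMap ℤ D) r = C r from rfl]; simp
    | add x y hx hy ihx ihy => rw [map_add, map_add, ihx, ihy]
    | mul x y hx hy ihx ihy => rw [map_mul, map_mul, ihx, ihy]
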